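/- arXiv:0805.3182 — 2 statements merged into one kernel-verified Lean document; each statement's English description precedes it below -/
import Mathlib

section
/- Let ζ ∈ (-1, 0) and let 0 < ξ < 1 be small enough that 1 + (4/(ζ²-1))·(ξ/(1-ξ)) > 0. Then 1 - ζ - 2α₀ > 0, where α₀ = (1/2)(1 - ξ(1 + 2/|1-ζ| - 2/|1+ζ|))/(1 - ξ). That is, for inner pushers the coefficient A = (f_p L/(32πμ))(1 - ζ - 2α₀) is positive whenever f_p, L, μ > 0. -/
open Real

theorem inner_pusher_positive (ζ ξ : ℝ) (hζ0 : -1 < ζ) (hζ1 : ζ < 0)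
    (hξ0 : 0 < ξ) (hξ1 : ξ < 1)
    (hsmall : 1 + (4 / (ζ ^ 2 - 1)) * (ξ / (1 - ξ)) > 0) :
    1 - ζ - 2 * ((1 / 2) * (1 - ξ * (1 + 2 / |1 - ζ| - 2 / |1 + ζ|)) / (1 - ξ)) > 0 ∧
    ∀ fp L μ : ℝ, 0 < fp → 0 < L → 0 < μ →
      (fp * L / (32 * Real.pi * μ)) *
        (1 - ζ - 2 * ((1 / 2) * (1 - ξ * (1 + 2 / |1 - ζ| - 2 / |1 + ζ|)) / (1 - ξ))) > 0 := by
  have h1 : (0:ℝ) < 1 - ζ := by linarith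
  have h2 : (0:ℝ) < 1 + ζ := by linarith
  have h3 : (0:ℝ) < 1 - ξ := by linarith
  have h4 : (0:ℝ) < 1 - ζ^2 := by nlinarith
  have hne : ζ ^ 2 - 1 ≠ 0 := by nlinarith
  rw [abs_of_pos h1, abs_of_pos h2]
  have heq : (4 / (ζ ^ 2 - 1)) * (ξ / (1 - ξ)) = -((4*ξ) / ((1-ζ^2)*(1-ξ))) := by
    field_simp
    ring
  rw [heq] at hsmall
  have hlt : (4*ξ) / ((1-ζ^2)*(1-ξ)) < 1 := by linarith
  have hA : (1-ξ)*(1-ζ^2) - 4*ξ > 0 := by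
    have := (div_lt_one (by positivity)).mp hlt
    nlinarith
  have hprod := mul_pos (neg_pos.2 hζ1) hA
  have key : 1 - ζ - 2 * ((1 / 2) * (1 - ξ * (1 + 2 / (1 - ζ) - 2 / (1 + ζ))) / (1 - ξ)) > 0 := by
    rw [gt_iff_lt, ← sub_pos]
    field_simp
    nlinarith [hprod, mul_pos h1 h2]
  refine ⟨key, fun fp L μ hfp hL hμ => ?_⟩
  have hc : 0 < fp * L / (32 * Real.pi * μ) := by positivity
  exact mul_pos hc key
end

section
/- Let ζ ∈ (0, 1) and let 0 < ξ < 1 be small enough that 1 + (4/(ζ²-1))·(ξ/(1-ξ)) > 0. Then 1 - ζ - 2α₀ < 0, where α₀ = (1/2)(1 - ξ(1 + 2/|1-ζ| - 2/|1+ζ|))/(1 - ξ). That is, for inner pullers the coefficient A = (f_p L/(32πμ))(1 - ζ - 2α₀) is negative whenever f_p, L, μ > 0. -/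
open Real

theorem inner_puller_negative (ζ ξ : ℝ) (hζ0 : 0 < ζ) (hζ1 : ζ < 1)
    (hξ0 : 0 < ξ) (hξ1 : ξ < 1)
    (hsmall : 1 + (4 / (ζ ^ 2 - 1)) * (ξ / (1 - ξ)) > 0) :
    1 - ζ - 2 * ((1 / 2) * (1 - ξ * (1 + 2 / |1 - ζ| - 2 / |1 + ζ|)) / (1 - ξ)) < 0 ∧
    ∀ fp L μ : ℝ, 0 < fp → 0 < L → 0 < μ →
      (fp * L / (32 * Real.pi * μ)) *
        (1 - ζ - 2 * ((1 / 2) * (1 - ξ * (1 + 2 / |1 - ζ| - 2 / |1 + ζ|)) / (1 - ξ))) < 0 := by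
  have h1 : |1 - ζ| = 1 - ζ := abs_of_pos (by linarith)
  have h2 : |1 + ζ| = 1 + ζ := abs_of_pos (by linarith)
  have hξ : (0:ℝ) < 1 - ξ := by linarith
  have hz1 : (0:ℝ) < 1 - ζ := by linarith
  have hz2 : (0:ℝ) < 1 + ζ := by linarith
  have hz : (0:ℝ) < 1 - ζ ^ 2 := by nlinarith
  have hne1 : ζ ^ 2 - 1 ≠ 0 := by nlinarith
  have hne2 : (1:ℝ) - ξ ≠ 0 := ne_of_gt hξ
  have hne3 : (1 - ζ ^ 2) * (1 - ξ) ≠ 0 := by positivity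
  have e1 : (4 / (ζ ^ 2 - 1)) * (ξ / (1 - ξ)) = -(4 * ξ / ((1 - ζ ^ 2) * (1 - ξ))) := by
    rw [div_mul_div_comm,
      show -(4 * ξ / ((1 - ζ ^ 2) * (1 - ξ))) = (-(4 * ξ)) / ((1 - ζ ^ 2) * (1 - ξ)) from
        (neg_div _ _).symm,
      div_eq_div_iff (mul_ne_zero hne1 hne2) hne3]
    ring
  rw [e1] at hsmall
  have hmain : 4 * ξ < (1 - ζ ^ 2) * (1 - ξ) := by
    have : 4 * ξ / ((1 - ζ ^ 2) * (1 - ξ)) < 1 := by linarith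
    rwa [div_lt_one (by positivity)] at this
  have key : 1 - ζ - 2 * ((1 / 2) * (1 - ξ * (1 + 2 / |1 - ζ| - 2 / |1 + ζ|)) / (1 - ξ)) < 0 := by
    rw [h1, h2]
    have expand : 1 - ζ - 2 * ((1 / 2) * (1 - ξ * (1 + 2 / (1 - ζ) - 2 / (1 + ζ))) / (1 - ξ))
        = ζ * (4 * ξ - (1 - ζ ^ 2) * (1 - ξ)) / ((1 - ζ ^ 2) * (1 - ξ)) := by
      field_simp
      ring
    rw [expand]
    apply div_neg_of_neg_of_pos _ (by positivity)
    nlinarith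
  refine ⟨key, fun fp L μ hfp hL hμ => ?_⟩
  have hpos : 0 < fp * L / (32 * Real.pi * μ) := by positivity
  exact mul_neg_of_pos_of_neg hpos key
end
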